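/- Let T be a positive integer, let ε_1, …, ε_T ≥ 0, and let θ_0, θ_1, …, θ_T ∈ ℝⁿ satisfy ‖θ_{k+1} − G(θ_k)‖₂² ≤ ε_{k+1} for all k = 0, 1, …, T−1, where G(θ) := (ΦᵀDΦ)⁻¹ΦᵀD(R + γPΦθ). Then ‖Φθ_T − Φθ*‖_D ≤ √(λ_max(ΦᵀDΦ)) · ∑_{k=1}^{T} γ^{T−k}√(ε_k) + γ^T‖Φθ_0 − Φθ*‖_D, where θ* := −(ΦᵀD(γP − I)Φ)⁻¹ΦᵀDR is the solution of the projected Bellman equation. -/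

import Mathlib

open Matrix BigOperators

namespace TDaux
variable {N n : ℕ}


lemma weighted_CS (d x y : Fin N → ℝ) (hd : ∀ i, 0 ≤ d i) :
    ∑ i, d i * (x i * y i) ≤
      Real.sqrt (∑ i, d i * x i ^ 2) * Real.sqrt (∑ i, d i * y i ^ 2) := by
  have h := Finset.sum_mul_sq_le_sq_mul_sq Finset.univ
      (fun i => Real.sqrt (d i) * x i) (fun i => Real.sqrt (d i) * y i)
  have e1 : ∀ i : Fin N, (Real.sqrt (d i) * x i) * (Real.sqrt (d i) * y i) = d i * (x i * y i) := by
    intro i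
    have : Real.sqrt (d i) * Real.sqrt (d i) = d i := Real.mul_self_sqrt (hd i)
    ring_nf
    rw [Real.sq_sqrt (hd i)]; ring
  have e2 : ∀ i : Fin N, (Real.sqrt (d i) * x i) ^ 2 = d i * x i ^ 2 := by
    intro i; rw [mul_pow, Real.sq_sqrt (hd i)]
  have e3 : ∀ i : Fin N, (Real.sqrt (d i) * y i) ^ 2 = d i * y i ^ 2 := by
    intro i; rw [mul_pow, Real.sq_sqrt (hd i)]
  simp only [e1, e2, e3] at h
  calc ∑ i, d i * (x i * y i) ≤ |∑ i, d i * (x i * y i)| := le_abs_self _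
    _ = Real.sqrt ((∑ i, d i * (x i * y i)) ^ 2) := (Real.sqrt_sq_eq_abs _).symm
    _ ≤ Real.sqrt ((∑ i, d i * x i ^ 2) * ∑ i, d i * y i ^ 2) := Real.sqrt_le_sqrt h
    _ = _ := Real.sqrt_mul (Finset.sum_nonneg fun i _ => mul_nonneg (hd i) (sq_nonneg _)) _

lemma weighted_triangle (d x y : Fin N → ℝ) (hd : ∀ i, 0 ≤ d i) :
    Real.sqrt (∑ i, d i * (x i + y i) ^ 2) ≤
      Real.sqrt (∑ i, d i * x i ^ 2) + Real.sqrt (∑ i, d i * y i ^ 2) := by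
  set a := Real.sqrt (∑ i, d i * x i ^ 2) with ha
  set b := Real.sqrt (∑ i, d i * y i ^ 2) with hb
  have ha0 : 0 ≤ a := Real.sqrt_nonneg _
  have hb0 : 0 ≤ b := Real.sqrt_nonneg _
  have hx : ∑ i, d i * x i ^ 2 = a ^ 2 := by
    rw [ha, Real.sq_sqrt (Finset.sum_nonneg fun i _ => mul_nonneg (hd i) (sq_nonneg _))]
  have hy : ∑ i, d i * y i ^ 2 = b ^ 2 := by
    rw [hb, Real.sq_sqrt (Finset.sum_nonneg fun i _ => mul_nonneg (hd i) (sq_nonneg _))]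
  have hcs := weighted_CS d x y hd
  rw [← ha, ← hb] at hcs
  have hexp : ∑ i, d i * (x i + y i) ^ 2 ≤ (a + b) ^ 2 := by
    have : ∑ i, d i * (x i + y i) ^ 2
        = (∑ i, d i * x i ^ 2) + 2 * (∑ i, d i * (x i * y i)) + (∑ i, d i * y i ^ 2) := by
      rw [Finset.mul_sum, ← Finset.sum_add_distrib, ← Finset.sum_add_distrib]
      exact Finset.sum_congr rfl fun i _ => by ring
    rw [this, hx, hy]; nlinarith [hcs]
  calc Real.sqrt (∑ i, d i * (x i + y i) ^ 2) ≤ Real.sqrt ((a + b) ^ 2) :=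
        Real.sqrt_le_sqrt hexp
    _ = a + b := by rw [Real.sqrt_sq (by linarith)]



lemma P_nonexpansive (P : Matrix (Fin N) (Fin N) ℝ) (d : Fin N → ℝ)
    (hPnonneg : ∀ i j, 0 ≤ P i j) (hProw : ∀ i, ∑ j, P i j = 1)
    (hd : ∀ i, 0 ≤ d i) (hstat : Matrix.vecMul d P = d) (x : Fin N → ℝ) :
    ∑ i, d i * (P.mulVec x i) ^ 2 ≤ ∑ i, d i * x i ^ 2 := by
  have key : ∀ i, (P.mulVec x i) ^ 2 ≤ ∑ j, P i j * x j ^ 2 := by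
    intro i
    have h := Finset.sum_mul_sq_le_sq_mul_sq Finset.univ
        (fun j => Real.sqrt (P i j)) (fun j => Real.sqrt (P i j) * x j)
    have e1 : ∀ j, Real.sqrt (P i j) * (Real.sqrt (P i j) * x j) = P i j * x j := by
      intro j; rw [← mul_assoc, Real.mul_self_sqrt (hPnonneg i j)]
    have e2 : ∀ j, (Real.sqrt (P i j)) ^ 2 = P i j := fun j => Real.sq_sqrt (hPnonneg i j)
    have e3 : ∀ j : Fin N, (Real.sqrt (P i j) * x j) ^ 2 = P i j * x j ^ 2 := by
      intro j; rw [mul_pow, Real.sq_sqrt (hPnonneg i j)]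
    simp only [e1, e2, e3, hProw i, one_mul] at h
    simpa [Matrix.mulVec, dotProduct] using h
  calc ∑ i, d i * (P.mulVec x i) ^ 2 ≤ ∑ i, d i * ∑ j, P i j * x j ^ 2 := by
        apply Finset.sum_le_sum; intro i _; exact mul_le_mul_of_nonneg_left (key i) (hd i)
    _ = ∑ j, (∑ i, d i * P i j) * x j ^ 2 := by
        simp_rw [Finset.mul_sum, Finset.sum_mul]
        rw [Finset.sum_comm]
        exact Finset.sum_congr rfl fun j _ => Finset.sum_congr rfl fun i _ => by ring
    _ = ∑ j, d j * x j ^ 2 := by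
        apply Finset.sum_congr rfl; intro j _
        have : ∑ i, d i * P i j = d j := by
          have := congrFun hstat j
          simpa [Matrix.vecMul, dotProduct] using this
        rw [this]

lemma quadform_le_iSup {n : ℕ} (hn : 0 < n) (A : Matrix (Fin n) (Fin n) ℝ)
    (hA : A.IsHermitian) (v : Fin n → ℝ) :
    v ⬝ᵥ A.mulVec v ≤ (⨆ i, hA.eigenvalues i) * (v ⬝ᵥ v) := by
  have : Nonempty (Fin n) := ⟨⟨0, hn⟩⟩
  set U : Matrix (Fin n) (Fin n) ℝ := (hA.eigenvectorUnitary : Matrix (Fin n) (Fin n) ℝ) with hU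
  have hspec := hA.spectral_theorem
  have hdiag : Matrix.diagonal ((RCLike.ofReal : ℝ → ℝ) ∘ hA.eigenvalues)
      = Matrix.diagonal hA.eigenvalues := by congr 1
  set y : Fin n → ℝ := Matrix.vecMul v U with hy
  have hUU : U * star U = 1 := Matrix.mem_unitaryGroup_iff.mp hA.eigenvectorUnitary.2
  have hstarU : star U = Uᵀ := by
    rw [Matrix.star_eq_conjTranspose, Matrix.conjTranspose_eq_transpose_of_trivial]
  have hUUt : U * Uᵀ = 1 := by rw [← hstarU]; exact hUU
  have lhs_eq : v ⬝ᵥ A.mulVec v = ∑ i, hA.eigenvalues i * y i ^ 2 := by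
    conv_lhs => rw [hspec]
    rw [Unitary.conjStarAlgAut_apply, hdiag, Matrix.mul_assoc, ← Matrix.mulVec_mulVec, Matrix.dotProduct_mulVec,
      ← Matrix.mulVec_mulVec, hstarU, Matrix.mulVec_transpose]
    simp only [dotProduct, Matrix.mulVec_diagonal, ← hy]
    exact Finset.sum_congr rfl fun i _ => by ring
  have ynorm : v ⬝ᵥ v = ∑ i, y i ^ 2 := by
    calc v ⬝ᵥ v = v ⬝ᵥ (U * Uᵀ).mulVec v := by rw [hUUt, Matrix.one_mulVec]
      _ = y ⬝ᵥ y := by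
          rw [← Matrix.mulVec_mulVec, Matrix.dotProduct_mulVec, Matrix.mulVec_transpose]
      _ = ∑ i, y i ^ 2 := by simp [dotProduct, sq]
  rw [lhs_eq, ynorm, Finset.mul_sum]
  apply Finset.sum_le_sum
  intro i _
  have hle : hA.eigenvalues i ≤ ⨆ j, hA.eigenvalues j :=
    le_ciSup (Set.Finite.bddAbove (Set.finite_range _)) i
  exact mul_le_mul_of_nonneg_right hle (sq_nonneg _)



lemma dot_PhiT_D (Φ : Matrix (Fin N) (Fin n) ℝ) (d : Fin N → ℝ)
    (x : Fin n → ℝ) (w : Fin N → ℝ) :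
    x ⬝ᵥ (Φᵀ * Matrix.diagonal d).mulVec w = ∑ i, d i * (Φ.mulVec x i * w i) := by
  rw [← Matrix.mulVec_mulVec, Matrix.dotProduct_mulVec, Matrix.vecMul_transpose]
  simp only [dotProduct, Matrix.mulVec_diagonal]
  exact Finset.sum_congr rfl fun i _ => by ring

lemma quad_eq (Φ : Matrix (Fin N) (Fin n) ℝ) (d : Fin N → ℝ) (x : Fin n → ℝ) :
    x ⬝ᵥ (Φᵀ * Matrix.diagonal d * Φ).mulVec x = ∑ i, d i * (Φ.mulVec x i) ^ 2 := by
  rw [← Matrix.mulVec_mulVec, dot_PhiT_D]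
  exact Finset.sum_congr rfl fun i _ => by ring

lemma Phi_inj (Φ : Matrix (Fin N) (Fin n) ℝ) (hΦ : Φ.rank = n) (v : Fin n → ℝ)
    (hv : Φ.mulVec v = 0) : v = 0 := by
  have hker : LinearMap.ker Φ.mulVecLin = ⊥ := by
    have h1 := Φ.mulVecLin.finrank_range_add_finrank_ker
    rw [Module.finrank_fin_fun] at h1
    have h2 : Matrix.rank Φ = Module.finrank ℝ (LinearMap.range Φ.mulVecLin) := rfl
    rw [← h2, hΦ] at h1
    have h3 : Module.finrank ℝ (LinearMap.ker Φ.mulVecLin) = 0 := by omega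
    exact Submodule.finrank_eq_zero.mp h3
  have : v ∈ LinearMap.ker Φ.mulVecLin := by
    simpa [Matrix.mulVecLin] using hv
  rw [hker] at this
  simpa using this

lemma sum_d_sq_zero (d : Fin N → ℝ) (hdpos : ∀ s, 0 < d s) (w : Fin N → ℝ)
    (h : ∑ i, d i * w i ^ 2 ≤ 0) : w = 0 := by
  have hz : ∑ i, d i * w i ^ 2 = 0 :=
    le_antisymm h (Finset.sum_nonneg fun i _ => mul_nonneg (hdpos i).le (sq_nonneg _))
  funext i
  have := (Finset.sum_eq_zero_iff_of_nonneg
    (fun i _ => mul_nonneg (hdpos i).le (sq_nonneg (w i)))).mp hz i (Finset.mem_univ i)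
  have : w i ^ 2 = 0 := by
    rcases mul_eq_zero.mp this with h' | h'
    · exact absurd h' (hdpos i).ne'
    · exact h'
  exact pow_eq_zero_iff (by norm_num) |>.mp this

lemma M_isUnit (Φ : Matrix (Fin N) (Fin n) ℝ) (d : Fin N → ℝ)
    (hdpos : ∀ s, 0 < d s) (hΦ : Φ.rank = n)
    (hHerm : (Φᵀ * Matrix.diagonal d * Φ).IsHermitian) :
    IsUnit (Φᵀ * Matrix.diagonal d * Φ) := by
  have hpd : (Φᵀ * Matrix.diagonal d * Φ).PosDef := by
    refine Matrix.PosDef.of_dotProduct_mulVec_pos hHerm fun x hx => ?_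
    rw [star_trivial, quad_eq]
    have hΦx : Φ.mulVec x ≠ 0 := fun h => hx (Phi_inj Φ hΦ x h)
    by_contra hle
    push_neg at hle
    exact hΦx (sum_d_sq_zero d hdpos _ hle)
  exact hpd.isUnit

lemma A_isUnit (P : Matrix (Fin N) (Fin N) ℝ) (d : Fin N → ℝ) (γ : ℝ)
    (Φ : Matrix (Fin N) (Fin n) ℝ)
    (hPnonneg : ∀ i j, 0 ≤ P i j) (hProw : ∀ i, ∑ j, P i j = 1)
    (hdpos : ∀ s, 0 < d s) (hstat : Matrix.vecMul d P = d)
    (hγ0 : 0 < γ) (hγ1 : γ < 1) (hΦ : Φ.rank = n) :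
    IsUnit (Φᵀ * Matrix.diagonal d * (γ • P - 1) * Φ) := by
  set A := Φᵀ * Matrix.diagonal d * (γ • P - 1) * Φ with hAdef
  rw [← Matrix.mulVec_injective_iff_isUnit]
  have h0 : ∀ v, A.mulVec v = 0 → v = 0 := by
    intro v hv
    set u := Φ.mulVec v with hu
    set s := ∑ i, d i * (u i) ^ 2 with hs
    have hs0 : 0 ≤ s := Finset.sum_nonneg fun i _ => mul_nonneg (hdpos i).le (sq_nonneg _)
    have hexp : A.mulVec v
        = (Φᵀ * Matrix.diagonal d).mulVec (γ • P.mulVec u - u) := by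
      rw [hAdef, ← Matrix.mulVec_mulVec, ← Matrix.mulVec_mulVec, ← hu,
        Matrix.sub_mulVec, Matrix.smul_mulVec, Matrix.one_mulVec]
    have hdot : v ⬝ᵥ A.mulVec v = 0 := by rw [hv, dotProduct_zero]
    rw [hexp, dot_PhiT_D] at hdot
    have hsum : ∑ i, d i * (u i * (γ • P.mulVec u - u) i)
        = γ * (∑ i, d i * (u i * P.mulVec u i)) - s := by
      rw [Finset.mul_sum, ← Finset.sum_sub_distrib]
      refine Finset.sum_congr rfl fun i _ => ?_
      simp only [Pi.sub_apply, Pi.smul_apply, smul_eq_mul]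
      ring
    rw [hsum, sub_eq_zero] at hdot
    have hCS : ∑ i, d i * (u i * P.mulVec u i) ≤ s := by
      have h1 := weighted_CS d u (P.mulVec u) (fun i => (hdpos i).le)
      have h2 : Real.sqrt (∑ i, d i * (P.mulVec u i) ^ 2) ≤ Real.sqrt s :=
        Real.sqrt_le_sqrt (P_nonexpansive P d hPnonneg hProw (fun i => (hdpos i).le) hstat u)
      calc ∑ i, d i * (u i * P.mulVec u i)
          ≤ Real.sqrt s * Real.sqrt (∑ i, d i * (P.mulVec u i) ^ 2) := h1
        _ ≤ Real.sqrt s * Real.sqrt s :=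
            mul_le_mul_of_nonneg_left h2 (Real.sqrt_nonneg _)
        _ = s := Real.mul_self_sqrt hs0
    have hsle : s ≤ 0 := by nlinarith
    exact Phi_inj Φ hΦ v (sum_d_sq_zero d hdpos u hsle)
  intro a b hab
  have : A.mulVec (a - b) = 0 := by rw [Matrix.mulVec_sub, hab, sub_self]
  have := h0 _ this
  exact sub_eq_zero.mp this

lemma proj_nonexpansive (Φ : Matrix (Fin N) (Fin n) ℝ) (d : Fin N → ℝ)
    (hdpos : ∀ s, 0 < d s)
    (hM : IsUnit (Φᵀ * Matrix.diagonal d * Φ)) (z : Fin N → ℝ) :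
    ∑ i, d i * (Φ.mulVec ((Φᵀ * Matrix.diagonal d * Φ)⁻¹.mulVec
      ((Φᵀ * Matrix.diagonal d).mulVec z)) i) ^ 2 ≤ ∑ i, d i * z i ^ 2 := by
  set M := Φᵀ * Matrix.diagonal d * Φ with hMdef
  set w := M⁻¹.mulVec ((Φᵀ * Matrix.diagonal d).mulVec z) with hw
  set s := ∑ i, d i * (Φ.mulVec w i) ^ 2 with hs
  set t := ∑ i, d i * z i ^ 2 with ht
  have hs0 : 0 ≤ s := Finset.sum_nonneg fun i _ => mul_nonneg (hdpos i).le (sq_nonneg _)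
  have ht0 : 0 ≤ t := Finset.sum_nonneg fun i _ => mul_nonneg (hdpos i).le (sq_nonneg _)
  have hMw : M.mulVec w = (Φᵀ * Matrix.diagonal d).mulVec z := by
    rw [hw, Matrix.mulVec_mulVec, Matrix.mul_nonsing_inv _ (Matrix.isUnit_iff_isUnit_det _ |>.mp hM),
      Matrix.one_mulVec]
  have hseq : s = ∑ i, d i * (Φ.mulVec w i * z i) := by
    rw [hs, ← quad_eq Φ d w, ← hMdef, hMw, dot_PhiT_D]
  have hCS : s ≤ Real.sqrt s * Real.sqrt t := by
    calc s = ∑ i, d i * (Φ.mulVec w i * z i) := hseq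
      _ ≤ Real.sqrt (∑ i, d i * (Φ.mulVec w i) ^ 2) * Real.sqrt (∑ i, d i * z i ^ 2) :=
          weighted_CS d (Φ.mulVec w) z (fun i => (hdpos i).le)
      _ = Real.sqrt s * Real.sqrt t := by rw [← hs, ← ht]
  nlinarith [Real.sq_sqrt hs0, Real.sq_sqrt ht0, Real.sqrt_nonneg s, Real.sqrt_nonneg t,
    sq_nonneg (Real.sqrt s - Real.sqrt t)]

end TDaux

namespace TDaux

lemma M_posdef {N n : ℕ} (Φ : Matrix (Fin N) (Fin n) ℝ) (d : Fin N → ℝ)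
    (hdpos : ∀ s, 0 < d s) (hΦ : Φ.rank = n)
    (hHerm : (Φᵀ * Matrix.diagonal d * Φ).IsHermitian) :
    (Φᵀ * Matrix.diagonal d * Φ).PosDef := by
  refine Matrix.PosDef.of_dotProduct_mulVec_pos hHerm fun x hx => ?_
  rw [star_trivial, quad_eq]
  have hΦx : Φ.mulVec x ≠ 0 := fun h => hx (Phi_inj Φ hΦ x h)
  by_contra hle
  push_neg at hle
  exact hΦx (sum_d_sq_zero d hdpos _ hle)

end TDaux

/-- If `‖θ_{k+1} − G(θ_k)‖₂² ≤ ε_{k+1}` for `k = 0,…,T−1`, where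
`G(θ) := (ΦᵀDΦ)⁻¹ΦᵀD(R + γPΦθ)`, then
`‖Φθ_T − Φθ*‖_D ≤ √(λ_max(ΦᵀDΦ)) · ∑_{k=1}^{T} γ^{T−k}√(ε_k)
  + γ^T‖Φθ_0 − Φθ*‖_D`,
where `θ* := −(ΦᵀD(γP − I)Φ)⁻¹ΦᵀDR`. -/
theorem deterministic_periodic_TD_error_bound
    (N n : ℕ) (hN : 0 < N) (hn : 0 < n) (hnN : n ≤ N)
    (P : Matrix (Fin N) (Fin N) ℝ) (d : Fin N → ℝ) (γ : ℝ)
    (Φ : Matrix (Fin N) (Fin n) ℝ) (R : Fin N → ℝ)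
    (hPnonneg : ∀ i j, 0 ≤ P i j)
    (hProw : ∀ i, ∑ j, P i j = 1)
    (hdpos : ∀ s, 0 < d s)
    (hdsum : ∑ s, d s = 1)
    (hstat : Matrix.vecMul d P = d)
    (hγ0 : 0 < γ) (hγ1 : γ < 1)
    (hΦ : Φ.rank = n)
    (hHerm : (Φᵀ * Matrix.diagonal d * Φ).IsHermitian)
    (T : ℕ) (hT : 0 < T)
    (ε : ℕ → ℝ) (hε : ∀ k, 1 ≤ k → k ≤ T → 0 ≤ ε k)
    (θ : ℕ → Fin n → ℝ)
    (hrec : ∀ k < T,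
      (∑ i, (θ (k + 1) i -
        ((Φᵀ * Matrix.diagonal d * Φ)⁻¹.mulVec
          ((Φᵀ * Matrix.diagonal d).mulVec
            (R + γ • P.mulVec (Φ.mulVec (θ k))))) i) ^ 2) ≤ ε (k + 1)) :
    let D : Matrix (Fin N) (Fin N) ℝ := Matrix.diagonal d
    let normD : (Fin N → ℝ) → ℝ := fun v => Real.sqrt (v ⬝ᵥ D.mulVec v)
    let θstar : Fin n → ℝ :=
      -((Φᵀ * D * (γ • P - 1) * Φ)⁻¹.mulVec ((Φᵀ * D).mulVec R))
    normD (Φ.mulVec (θ T) - Φ.mulVec θstar) ≤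
      Real.sqrt (⨆ i, hHerm.eigenvalues i) *
        (∑ k ∈ Finset.Icc 1 T, γ ^ (T - k) * Real.sqrt (ε k)) +
      γ ^ T * normD (Φ.mulVec (θ 0) - Φ.mulVec θstar) := by
  intro D normD θstar
  have hdnn : ∀ i, 0 ≤ d i := fun i => (hdpos i).le
  have hnormD : ∀ v : Fin N → ℝ, normD v = Real.sqrt (∑ i, d i * v i ^ 2) := by
    intro v
    show Real.sqrt (v ⬝ᵥ (Matrix.diagonal d).mulVec v) = _
    congr 1
    simp only [dotProduct, Matrix.mulVec_diagonal]
    exact Finset.sum_congr rfl fun i _ => by ring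
  have hnormD_nonneg : ∀ v, 0 ≤ normD v := fun v => Real.sqrt_nonneg _
  have hnormD_tri : ∀ x y : Fin N → ℝ, normD (x + y) ≤ normD x + normD y := by
    intro x y
    rw [hnormD, hnormD, hnormD]
    have := TDaux.weighted_triangle d x y hdnn
    simpa [Pi.add_apply] using this
  -- G map
  set G : (Fin n → ℝ) → (Fin n → ℝ) := fun t =>
    (Φᵀ * Matrix.diagonal d * Φ)⁻¹.mulVec
      ((Φᵀ * Matrix.diagonal d).mulVec (R + γ • P.mulVec (Φ.mulVec t))) with hG
  have hMpd := TDaux.M_posdef Φ d hdpos hΦ hHerm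
  have hMunit : IsUnit (Φᵀ * Matrix.diagonal d * Φ) := hMpd.isUnit
  have hMdet : IsUnit (Φᵀ * Matrix.diagonal d * Φ).det :=
    (Matrix.isUnit_iff_isUnit_det _).mp hMunit
  have hAunit := TDaux.A_isUnit P d γ Φ hPnonneg hProw hdpos hstat hγ0 hγ1 hΦ
  have hAdet := (Matrix.isUnit_iff_isUnit_det _).mp hAunit
  have hθstar : θstar
      = -((Φᵀ * Matrix.diagonal d * (γ • P - 1) * Φ)⁻¹.mulVec
          ((Φᵀ * Matrix.diagonal d).mulVec R)) := rfl
  -- fixed point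
  have hfix : G θstar = θstar := by
    have h1 : (Φᵀ * Matrix.diagonal d * (γ • P - 1) * Φ).mulVec θstar
        = -((Φᵀ * Matrix.diagonal d).mulVec R) := by
      rw [hθstar, Matrix.mulVec_neg, Matrix.mulVec_mulVec,
        Matrix.mul_nonsing_inv _ hAdet, Matrix.one_mulVec]
    have h2 : (Φᵀ * Matrix.diagonal d * (γ • P - 1) * Φ).mulVec θstar
        = (Φᵀ * Matrix.diagonal d).mulVec
            (γ • P.mulVec (Φ.mulVec θstar)) - (Φᵀ * Matrix.diagonal d).mulVec (Φ.mulVec θstar) := by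
      rw [← Matrix.mulVec_mulVec, ← Matrix.mulVec_mulVec, Matrix.sub_mulVec,
        Matrix.smul_mulVec, Matrix.one_mulVec, Matrix.mulVec_sub]
    have h3 : (Φᵀ * Matrix.diagonal d).mulVec (R + γ • P.mulVec (Φ.mulVec θstar))
        = (Φᵀ * Matrix.diagonal d * Φ).mulVec θstar := by
      have h4 := h2.symm.trans h1
      rw [Matrix.mulVec_add]
      conv_rhs => rw [← Matrix.mulVec_mulVec]
      linear_combination h4
    show (Φᵀ * Matrix.diagonal d * Φ)⁻¹.mulVec
        ((Φᵀ * Matrix.diagonal d).mulVec (R + γ • P.mulVec (Φ.mulVec θstar))) = θstar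
    rw [h3, Matrix.mulVec_mulVec, Matrix.nonsing_inv_mul _ hMdet, Matrix.one_mulVec]
  -- contraction
  have hcontract : ∀ t : Fin n → ℝ,
      normD (Φ.mulVec (G t) - Φ.mulVec θstar) ≤ γ * normD (Φ.mulVec t - Φ.mulVec θstar) := by
    intro t
    set u := Φ.mulVec t - Φ.mulVec θstar with hu
    have hdiff : Φ.mulVec (G t) - Φ.mulVec θstar
        = Φ.mulVec ((Φᵀ * Matrix.diagonal d * Φ)⁻¹.mulVec
            ((Φᵀ * Matrix.diagonal d).mulVec (γ • P.mulVec u))) := by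
      conv_lhs => rw [← hfix]
      rw [← Matrix.mulVec_sub]
      congr 1
      have e1 : G t - G θstar
          = (Φᵀ * Matrix.diagonal d * Φ)⁻¹.mulVec ((Φᵀ * Matrix.diagonal d).mulVec
              ((R + γ • P.mulVec (Φ.mulVec t)) - (R + γ • P.mulVec (Φ.mulVec θstar)))) := by
        rw [Matrix.mulVec_sub, Matrix.mulVec_sub]
      have e2 : (R + γ • P.mulVec (Φ.mulVec t)) - (R + γ • P.mulVec (Φ.mulVec θstar))
          = γ • P.mulVec u := by
        rw [hu, Matrix.mulVec_sub, smul_sub]; abel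
      rw [e1, e2]
    rw [hdiff, hnormD, hnormD]
    have hproj := TDaux.proj_nonexpansive Φ d hdpos hMunit (γ • P.mulVec u)
    have h1 : ∑ i, d i * ((γ • P.mulVec u) i) ^ 2 = γ ^ 2 * ∑ i, d i * (P.mulVec u i) ^ 2 := by
      rw [Finset.mul_sum]
      refine Finset.sum_congr rfl fun i _ => ?_
      simp only [Pi.smul_apply, smul_eq_mul]
      ring
    calc Real.sqrt (∑ i, d i * (Φ.mulVec ((Φᵀ * Matrix.diagonal d * Φ)⁻¹.mulVec
            ((Φᵀ * Matrix.diagonal d).mulVec (γ • P.mulVec u))) i) ^ 2)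
        ≤ Real.sqrt (∑ i, d i * ((γ • P.mulVec u) i) ^ 2) := Real.sqrt_le_sqrt hproj
      _ = Real.sqrt (γ ^ 2 * ∑ i, d i * (P.mulVec u i) ^ 2) := by rw [h1]
      _ = γ * Real.sqrt (∑ i, d i * (P.mulVec u i) ^ 2) := by
          rw [Real.sqrt_mul (sq_nonneg γ), Real.sqrt_sq hγ0.le]
      _ ≤ γ * Real.sqrt (∑ i, d i * u i ^ 2) := by
          have := TDaux.P_nonexpansive P d hPnonneg hProw hdnn hstat u
          exact mul_le_mul_of_nonneg_left (Real.sqrt_le_sqrt this) hγ0.le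
  -- lambda max bound
  have hlam0 : 0 ≤ ⨆ i, hHerm.eigenvalues i := by
    have i0 : Fin n := ⟨0, hn⟩
    have h1 : 0 ≤ hHerm.eigenvalues i0 := hMpd.posSemidef.eigenvalues_nonneg i0
    exact h1.trans (le_ciSup (Set.Finite.bddAbove (Set.finite_range _)) i0)
  set lam := ⨆ i, hHerm.eigenvalues i with hlam
  have hPhiBound : ∀ w : Fin n → ℝ,
      normD (Φ.mulVec w) ≤ Real.sqrt lam * Real.sqrt (∑ i, w i ^ 2) := by
    intro w
    rw [hnormD]
    have h2 := TDaux.quadform_le_iSup hn _ hHerm w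
    rw [TDaux.quad_eq] at h2
    have h3 : w ⬝ᵥ w = ∑ i, w i ^ 2 := by simp [dotProduct, sq]
    rw [h3] at h2
    calc Real.sqrt (∑ i, d i * (Φ.mulVec w i) ^ 2)
        ≤ Real.sqrt (lam * ∑ i, w i ^ 2) := Real.sqrt_le_sqrt h2
      _ = Real.sqrt lam * Real.sqrt (∑ i, w i ^ 2) := Real.sqrt_mul hlam0 _
  -- per-step estimate
  have hstep : ∀ k < T, normD (Φ.mulVec (θ (k+1)) - Φ.mulVec θstar)
      ≤ Real.sqrt lam * Real.sqrt (ε (k+1))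
        + γ * normD (Φ.mulVec (θ k) - Φ.mulVec θstar) := by
    intro k hk
    have hdecomp : Φ.mulVec (θ (k+1)) - Φ.mulVec θstar
        = (Φ.mulVec (θ (k+1)) - Φ.mulVec (G (θ k)))
          + (Φ.mulVec (G (θ k)) - Φ.mulVec θstar) := by abel
    have h1 : normD (Φ.mulVec (θ (k+1)) - Φ.mulVec (G (θ k)))
        ≤ Real.sqrt lam * Real.sqrt (ε (k+1)) := by
      rw [← Matrix.mulVec_sub]
      refine (hPhiBound _).trans ?_
      have h2 : ∑ i, ((θ (k+1) - G (θ k)) i) ^ 2 ≤ ε (k+1) := by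
        simpa [hG] using hrec k hk
      exact mul_le_mul_of_nonneg_left (Real.sqrt_le_sqrt h2) (Real.sqrt_nonneg _)
    calc normD (Φ.mulVec (θ (k+1)) - Φ.mulVec θstar)
        = normD ((Φ.mulVec (θ (k+1)) - Φ.mulVec (G (θ k)))
            + (Φ.mulVec (G (θ k)) - Φ.mulVec θstar)) := by rw [← hdecomp]
      _ ≤ normD (Φ.mulVec (θ (k+1)) - Φ.mulVec (G (θ k)))
            + normD (Φ.mulVec (G (θ k)) - Φ.mulVec θstar) := hnormD_tri _ _
      _ ≤ Real.sqrt lam * Real.sqrt (ε (k+1))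
            + γ * normD (Φ.mulVec (θ k) - Φ.mulVec θstar) :=
          add_le_add h1 (hcontract (θ k))
  -- induction
  have hmain : ∀ m, m ≤ T → normD (Φ.mulVec (θ m) - Φ.mulVec θstar)
      ≤ Real.sqrt lam * (∑ k ∈ Finset.Icc 1 m, γ ^ (m - k) * Real.sqrt (ε k))
        + γ ^ m * normD (Φ.mulVec (θ 0) - Φ.mulVec θstar) := by
    intro m
    induction m with
    | zero => intro _; simp
    | succ m ih =>
      intro hm
      have hkT : m < T := Nat.lt_of_succ_le hm
      have h1 := hstep m hkT
      have h2 := ih hkT.le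
      have h3 : γ * (Real.sqrt lam * (∑ k ∈ Finset.Icc 1 m, γ ^ (m - k) * Real.sqrt (ε k))
          + γ ^ m * normD (Φ.mulVec (θ 0) - Φ.mulVec θstar))
          = Real.sqrt lam * (∑ k ∈ Finset.Icc 1 m, γ ^ (m + 1 - k) * Real.sqrt (ε k))
          + γ ^ (m+1) * normD (Φ.mulVec (θ 0) - Φ.mulVec θstar) := by
        rw [mul_add]
        congr 1
        · rw [← mul_assoc, mul_comm γ (Real.sqrt lam), mul_assoc, Finset.mul_sum]
          congr 1
          refine Finset.sum_congr rfl fun k hk => ?_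
          have hkm : k ≤ m := (Finset.mem_Icc.mp hk).2
          have he : m + 1 - k = (m - k) + 1 := by omega
          rw [he, pow_succ]
          ring
        · rw [← mul_assoc]
          congr 1
          ring
      have hsum : (∑ k ∈ Finset.Icc 1 (m+1), γ ^ (m + 1 - k) * Real.sqrt (ε k))
          = (∑ k ∈ Finset.Icc 1 m, γ ^ (m + 1 - k) * Real.sqrt (ε k))
            + Real.sqrt (ε (m+1)) := by
        rw [Finset.sum_Icc_succ_top (by omega : 1 ≤ m + 1)]
        simp
      calc normD (Φ.mulVec (θ (m+1)) - Φ.mulVec θstar)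
          ≤ Real.sqrt lam * Real.sqrt (ε (m+1))
              + γ * normD (Φ.mulVec (θ m) - Φ.mulVec θstar) := h1
        _ ≤ Real.sqrt lam * Real.sqrt (ε (m+1))
              + γ * (Real.sqrt lam * (∑ k ∈ Finset.Icc 1 m, γ ^ (m - k) * Real.sqrt (ε k))
                + γ ^ m * normD (Φ.mulVec (θ 0) - Φ.mulVec θstar)) := by
            have := mul_le_mul_of_nonneg_left h2 hγ0.le
            linarith
        _ = Real.sqrt lam * (∑ k ∈ Finset.Icc 1 (m+1), γ ^ (m + 1 - k) * Real.sqrt (ε k))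
              + γ ^ (m+1) * normD (Φ.mulVec (θ 0) - Φ.mulVec θstar) := by
            rw [h3, hsum]
            ring
  exact hmain T le_rfl
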